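/- Let K be a compact topological group with Haar measure μ, let V be a finite-dimensional complex normed vector space, and let π be a continuous representation of K on V by continuous linear maps. Then the trace of the averaging operator P = ∫_K π(x) dμ(x) equals μ(K) · dim_ℂ V^K, where V^K is the subspace of K-invariant vectors. -/

import Mathlib

open MeasureTheory

/-- The submodule of `K`-invariant vectors of a representation `π` of a group `K` on a
complex normed space `V` by continuous linear maps. -/
def invariantSubmodule {K V : Type*} [Group K] [NormedAddCommGroup V] [NormedSpace ℂ V]
    (π : K →* (V →L[ℂ] V)) : Submodule ℂ V where
  carrier := {v : V | ∀ x : K, π x v = v}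
  zero_mem' := fun x => by simp
  add_mem' := fun hv hw x => by simp [map_add, hv x, hw x]
  smul_mem' := fun c v hv x => by simp [_root_.map_smul, hv x]

/-- For a continuous representation `π` of a compact group `K` with Haar measure `μ` on a
finite-dimensional complex normed space `V`, the trace of the averaging operator
`∫_K π(x) dμ(x)` equals `μ(K) · dim_ℂ V^K`. -/
theorem trace_average_eq_volume_mul_finrank_invariants
    {K : Type*} [Group K] [TopologicalSpace K] [IsTopologicalGroup K] [CompactSpace K]
    [MeasurableSpace K] [BorelSpace K] (μ : Measure K) [μ.IsHaarMeasure]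
    {V : Type*} [NormedAddCommGroup V] [NormedSpace ℂ V] [FiniteDimensional ℂ V]
    (π : K →* (V →L[ℂ] V)) (hπ : Continuous fun x : K => π x) :
    LinearMap.trace ℂ V ((∫ x : K, π x ∂μ : V →L[ℂ] V) : V →ₗ[ℂ] V) =
      ((μ Set.univ).toReal : ℂ) * (Module.finrank ℂ (invariantSubmodule π) : ℂ) := by
  -- integrability
  have hcs : HasCompactSupport (fun x : K => π x) :=
    IsCompact.of_isClosed_subset isCompact_univ (isClosed_tsupport _) (Set.subset_univ _)
  have hint : Integrable (fun x : K => π x) μ := hπ.integrable_of_hasCompactSupport hcs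
  set P : V →L[ℂ] V := ∫ x : K, π x ∂μ with hPdef
  set c : ℝ := (μ Set.univ).toReal with hc
  have hc_pos : 0 < c := by
    have h0 : 0 < μ Set.univ := isOpen_univ.measure_pos μ Set.univ_nonempty
    have hfin : μ Set.univ < ⊤ := measure_lt_top μ _
    exact ENNReal.toReal_pos h0.ne' hfin.ne
  have hcC : (c : ℂ) ≠ 0 := by
    exact_mod_cast (Complex.ofReal_ne_zero.mpr hc_pos.ne')
  -- π y ∘ P = P
  have hcomm : ∀ y : K, (π y).comp P = P := by
    intro y
    have h1 : (π y).comp P = ∫ x : K, (π y).comp (π x) ∂μ :=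
      ((ContinuousLinearMap.compL ℂ V V V (π y)).integral_comp_comm hint).symm
    rw [h1]
    have h2 : (fun x : K => (π y).comp (π x)) = fun x : K => π (y * x) := by
      funext x; rw [map_mul]; rfl
    rw [h2]
    exact integral_mul_left_eq_self (fun x : K => π x) y
  -- P v for invariant v
  have hPv : ∀ v ∈ invariantSubmodule π, P v = c • v := by
    intro v hv
    have : P v = ∫ x : K, π x v ∂μ := ContinuousLinearMap.integral_apply hint v
    rw [this]
    have : (fun x : K => π x v) = fun _ : K => v := funext hv
    rw [this, integral_const]
    rfl
  -- the normalized operator is a projection onto the invariants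
  set Q : V →ₗ[ℂ] V := (c : ℂ)⁻¹ • (P : V →ₗ[ℂ] V) with hQ
  have hproj : LinearMap.IsProj (invariantSubmodule π) Q := by
    constructor
    · intro v y
      have : π y (P v) = P v := by
        have := congrArg (fun (T : V →L[ℂ] V) => T v) (hcomm y)
        simpa using this
      simp only [hQ, LinearMap.smul_apply, ContinuousLinearMap.coe_coe]
      rw [(π y).map_smul, this]
    · intro v hv
      simp only [hQ, LinearMap.smul_apply, ContinuousLinearMap.coe_coe]
      rw [hPv v hv, ← Complex.coe_smul, smul_smul, inv_mul_cancel₀ hcC, one_smul]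
  have htr : LinearMap.trace ℂ V Q = (Module.finrank ℂ (invariantSubmodule π) : ℂ) :=
    hproj.trace
  have hPQ : (P : V →ₗ[ℂ] V) = (c : ℂ) • Q := by
    rw [hQ, smul_smul, mul_inv_cancel₀ hcC, one_smul]
  rw [hPQ, (LinearMap.trace ℂ V).map_smul, htr, smul_eq_mul]
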